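/- Let q be an odd prime power, a ∈ F_{q²}^× an element of multiplicative order q−1, and Y = [[0,0,a],[0,−1,0],[a⁻¹,0,0]], Z = [[0,0,1],[0,−1,0],[1,0,0]] over F_{q²}. Then YZ = diag(a, 1, a⁻¹), and the image of YZ in PSU₃(q) has order q−1. -/

import Mathlib

open Matrix

/-- The antidiagonal Hermitian form matrix `W`. -/
def Wmat (F : Type) [Field F] : Matrix (Fin 3) (Fin 3) F :=
  !![0, 0, 1; 0, 1, 0; 1, 0, 0]

/-- The special unitary group `SU₃(q)` as a subgroup of `SL₃(F_{q²})`: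
matrices `A` with `(A.map σ)ᵀ * W * A = W`, where `σ : x ↦ x^q`. -/
def SU3 (F : Type) [Field F] (σ : F →+* F) :
    Subgroup (Matrix.SpecialLinearGroup (Fin 3) F) where
  carrier := {A | ((A : Matrix (Fin 3) (Fin 3) F).map σ)ᵀ * Wmat F *
      (A : Matrix (Fin 3) (Fin 3) F) = Wmat F}
  one_mem' := by simp
  mul_mem' := by
    intro A B hA hB
    simp only [Set.mem_setOf_eq] at *
    calc ((↑(A * B) : Matrix (Fin 3) (Fin 3) F).map σ)ᵀ * Wmat F * ↑(A * B)
        = ((B : Matrix (Fin 3) (Fin 3) F).map σ)ᵀ *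
            (((A : Matrix (Fin 3) (Fin 3) F).map σ)ᵀ * Wmat F * A) * B := by
          simp only [Matrix.SpecialLinearGroup.coe_mul, Matrix.map_mul,
            Matrix.transpose_mul, Matrix.mul_assoc]
      _ = Wmat F := by rw [hA, hB]
  inv_mem' := by
    intro A hA
    simp only [Set.mem_setOf_eq] at *
    have h1 : (A : Matrix (Fin 3) (Fin 3) F) * (↑(A⁻¹) : Matrix (Fin 3) (Fin 3) F) = 1 := by
      rw [← Matrix.SpecialLinearGroup.coe_mul, mul_inv_cancel A,
        Matrix.SpecialLinearGroup.coe_one]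
    show ((↑(A⁻¹) : Matrix (Fin 3) (Fin 3) F).map σ)ᵀ * Wmat F *
        (↑(A⁻¹) : Matrix (Fin 3) (Fin 3) F) = Wmat F
    calc ((↑(A⁻¹) : Matrix (Fin 3) (Fin 3) F).map σ)ᵀ * Wmat F *
          (↑(A⁻¹) : Matrix (Fin 3) (Fin 3) F)
        = ((↑(A⁻¹) : Matrix (Fin 3) (Fin 3) F).map σ)ᵀ *
            (((A : Matrix (Fin 3) (Fin 3) F).map σ)ᵀ * Wmat F *
              (A : Matrix (Fin 3) (Fin 3) F)) *
            (↑(A⁻¹) : Matrix (Fin 3) (Fin 3) F) := by rw [hA]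
      _ = (((A : Matrix (Fin 3) (Fin 3) F) *
              (↑(A⁻¹) : Matrix (Fin 3) (Fin 3) F)).map σ)ᵀ * Wmat F *
            ((A : Matrix (Fin 3) (Fin 3) F) * (↑(A⁻¹) : Matrix (Fin 3) (Fin 3) F)) := by
          simp only [Matrix.map_mul, Matrix.transpose_mul, Matrix.mul_assoc]
      _ = Wmat F := by rw [h1]; simp

lemma map3 {F : Type} [Field F] (f : F →+* F) (a b c d e g h i j : F) :
    (!![a,b,c;d,e,g;h,i,j]).map f = !![f a, f b, f c; f d, f e, f g; f h, f i, f j] := by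
  ext k l; fin_cases k <;> fin_cases l <;> simp

lemma tr3 {F : Type} [Field F] (a b c d e g h i j : F) :
    (!![a,b,c;d,e,g;h,i,j])ᵀ = !![a,d,h;b,e,i;c,g,j] := by
  ext k l; fin_cases k <;> fin_cases l <;> simp

lemma diag3 {F : Type} [Field F] (a b c : F) :
    Matrix.diagonal ![a,b,c] = !![a,0,0;0,b,0;0,0,c] := by
  ext k l; fin_cases k <;> fin_cases l <;>
    simp [Matrix.diagonal_apply, Fin.ext_iff, Matrix.vecHead, Matrix.vecTail]

lemma mem_SU3_iff {F : Type} [Field F] {σ : F →+* F}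
    {A : Matrix.SpecialLinearGroup (Fin 3) F} :
    A ∈ SU3 F σ ↔ ((A : Matrix (Fin 3) (Fin 3) F).map σ)ᵀ * Wmat F *
      (A : Matrix (Fin 3) (Fin 3) F) = Wmat F := Iff.rfl

/-- Lemma 2.3: `YZ = diag(a, 1, a⁻¹)` and the image of `YZ` in
`PSU₃(q) = SU₃(q)/Z(SU₃(q))` has order `q - 1`. -/
theorem stmt_2 (p f q : ℕ) (hp : Nat.Prime p) (hpodd : Odd p) (hq : q = p ^ f)
    (F : Type) [Field F] [Fintype F] (hF : Fintype.card F = q ^ 2)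
    (σ : F →+* F) (hσ : ∀ x : F, σ x = x ^ q)
    (a : Fˣ) (ha : orderOf a = q - 1) :
    (!![0, 0, (a : F); 0, -1, 0; (a : F)⁻¹, 0, 0] : Matrix (Fin 3) (Fin 3) F) *
        !![0, 0, 1; 0, -1, 0; 1, 0, 0] =
      Matrix.diagonal ![(a : F), 1, (a : F)⁻¹] ∧
    ∃ (h1 : ((!![0, 0, (a : F); 0, -1, 0; (a : F)⁻¹, 0, 0] : Matrix (Fin 3) (Fin 3) F) *
          !![0, 0, 1; 0, -1, 0; 1, 0, 0]).det = 1)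
      (h2 : (⟨_, h1⟩ : Matrix.SpecialLinearGroup (Fin 3) F) ∈ SU3 F σ),
      orderOf (QuotientGroup.mk (⟨⟨_, h1⟩, h2⟩ : SU3 F σ) :
          SU3 F σ ⧸ Subgroup.center (SU3 F σ)) = q - 1 := by
  have hane : (a:F) ≠ 0 := Units.ne_zero a
  have hcard : 1 < Fintype.card F := Fintype.one_lt_card
  have hq2 : 2 ≤ q := by
    have h1 : 1 < q ^ 2 := hF ▸ hcard
    nlinarith
  -- a^(q-1) = 1 in F
  have haq : (a:F)^(q-1) = 1 := by
    have h := pow_orderOf_eq_one a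
    rw [ha] at h
    simpa using congrArg Units.val h
  have haq' : (a:F)^q = (a:F) := by
    have : q = (q-1) + 1 := by omega
    rw [this, pow_succ, haq, one_mul]
  have haσ : σ (a:F) = (a:F) := by rw [hσ, haq']
  have hainvσ : σ ((a:F)⁻¹) = (a:F)⁻¹ := by rw [hσ, inv_pow, haq']
  -- char p facts
  have hf : f ≠ 0 := by rintro rfl; simp [hq] at hq2
  obtain ⟨p', hcp'⟩ := CharP.exists F
  haveI := hcp'
  have hp'prime : p'.Prime := CharP.char_is_prime F p'
  obtain ⟨n0, hn0⟩ := FiniteField.card F p'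
  have hpp' : p = p' := by
    have h1 : p ∣ p' ^ (n0 : ℕ) := by
      rw [← hn0.2, hF, hq, ← pow_mul]
      exact dvd_pow_self p (by positivity)
    exact (Nat.prime_dvd_prime_iff_eq hp hp'prime).mp (hp.dvd_of_dvd_pow h1)
  subst hpp'
  have h2ne : (2:F) ≠ 0 := by
    intro h
    have h2 : (p:ℕ) ∣ 2 := (CharP.cast_eq_zero_iff F p 2).mp (by exact_mod_cast h)
    have hpe : p = 2 := (Nat.prime_dvd_prime_iff_eq hp Nat.prime_two).mp h2
    rw [hpe] at hpodd
    exact (Nat.not_odd_iff_even.mpr (by decide)) hpodd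
  -- the element γ with 2γ = -1
  set γ : F := -(2⁻¹ : F) with hγdef
  have hσγ : σ γ = γ := by
    rw [map_neg, map_inv₀, map_ofNat]
  have hγγ : γ + γ = -1 := by
    rw [hγdef]
    field_simp
    ring
  -- part 1 : the product is diagonal
  set d : Fin 3 → F := ![(a:F), 1, (a:F)⁻¹] with hd
  have hprod : (!![0, 0, (a : F); 0, -1, 0; (a : F)⁻¹, 0, 0] : Matrix (Fin 3) (Fin 3) F) *
        !![0, 0, 1; 0, -1, 0; 1, 0, 0] = Matrix.diagonal d := by
    rw [hd, diag3, Matrix.mul_fin_three]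
    norm_num
  refine ⟨hprod, ?_⟩
  have h1 : ((!![0, 0, (a : F); 0, -1, 0; (a : F)⁻¹, 0, 0] : Matrix (Fin 3) (Fin 3) F) *
          !![0, 0, 1; 0, -1, 0; 1, 0, 0]).det = 1 := by
    rw [hprod, Matrix.det_diagonal, hd, Fin.prod_univ_three]
    simp [mul_inv_cancel₀ hane]
  have h2 : (⟨_, h1⟩ : Matrix.SpecialLinearGroup (Fin 3) F) ∈ SU3 F σ := by
    show (((!![0, 0, (a : F); 0, -1, 0; (a : F)⁻¹, 0, 0] * !![0, 0, 1; 0, -1, 0; 1, 0, 0] : Matrix (Fin 3) (Fin 3) F)).map σ)ᵀ * Wmat F * (!![0, 0, (a : F); 0, -1, 0; (a : F)⁻¹, 0, 0] * !![0, 0, 1; 0, -1, 0; 1, 0, 0]) = Wmat F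
    rw [hprod, hd, diag3, Wmat, map3, tr3, haσ, hainvσ, _root_.map_one, _root_.map_zero,
      Matrix.mul_fin_three, Matrix.mul_fin_three]
    ext k l
    fin_cases k <;> fin_cases l <;>
      simp [mul_inv_cancel₀ hane, inv_mul_cancel₀ hane]
  refine ⟨h1, h2, ?_⟩
  set G := SU3 F σ with hG
  set g : G := (⟨⟨_, h1⟩, h2⟩ : G) with hg
  -- the auxiliary unitary matrix U
  set Umat : Matrix (Fin 3) (Fin 3) F := !![1, 1, γ; 0, 1, -1; 0, 0, 1] with hU
  have hUdet : Umat.det = 1 := by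
    rw [hU, Matrix.det_fin_three]
    norm_num [Matrix.vecHead, Matrix.vecTail]
    simp
  have hUmem : (⟨Umat, hUdet⟩ : Matrix.SpecialLinearGroup (Fin 3) F) ∈ SU3 F σ := by
    show (Umat.map σ)ᵀ * Wmat F * Umat = Wmat F
    rw [hU, Wmat, map3, tr3, hσγ, _root_.map_one, _root_.map_zero, _root_.map_neg, _root_.map_one,
      Matrix.mul_fin_three, Matrix.mul_fin_three]
    ext k l
    fin_cases k <;> fin_cases l <;>
      simp [Matrix.vecHead, Matrix.vecTail] <;> linear_combination hγγ
  set u : G := (⟨⟨Umat, hUdet⟩, hUmem⟩ : G) with hu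
  -- matrix-level coercion of g^n
  have hgpow : ∀ n : ℕ, (((g^n : G) : Matrix.SpecialLinearGroup (Fin 3) F) :
      Matrix (Fin 3) (Fin 3) F) = Matrix.diagonal (d^n) := by
    intro n
    have h3 : (((g^n : G) : Matrix.SpecialLinearGroup (Fin 3) F) :
        Matrix (Fin 3) (Fin 3) F) = (((g : G) : Matrix.SpecialLinearGroup (Fin 3) F) :
        Matrix (Fin 3) (Fin 3) F)^n := rfl
    have h4 : (((g : G) : Matrix.SpecialLinearGroup (Fin 3) F) :
        Matrix (Fin 3) (Fin 3) F) = Matrix.diagonal d := hprod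
    rw [h3, h4, Matrix.diagonal_pow]
  -- g^(q-1) = 1
  have hgq : g^(q-1) = 1 := by
    apply Subtype.ext
    apply Subtype.ext
    show (((g^(q-1) : G) : Matrix.SpecialLinearGroup (Fin 3) F) :
        Matrix (Fin 3) (Fin 3) F) = 1
    have hdpow : d^(q-1) = 1 := by
      funext i
      fin_cases i <;>
        simp [hd, Pi.pow_apply, haq, Matrix.vecHead, Matrix.vecTail, inv_pow]
    rw [hgpow, hdpow]
    exact Matrix.diagonal_one
  -- central powers are trivial powers of a
  have key : ∀ n : ℕ, (QuotientGroup.mk g : G ⧸ Subgroup.center G)^n = 1 → (q-1) ∣ n := by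
    intro n hn
    have hc : g^n ∈ Subgroup.center G := by
      rw [← QuotientGroup.eq_one_iff]
      exact hn
    have hcomm : u * g^n = g^n * u := Subgroup.mem_center_iff.mp hc u
    have hmat : Umat * Matrix.diagonal (d^n) = Matrix.diagonal (d^n) * Umat := by
      have h5 := congrArg (fun x : G => ((x : Matrix.SpecialLinearGroup (Fin 3) F) :
        Matrix (Fin 3) (Fin 3) F)) hcomm
      beta_reduce at h5
      have h6 : ((((u * g^n : G) : Matrix.SpecialLinearGroup (Fin 3) F)) :
          Matrix (Fin 3) (Fin 3) F) = Umat * Matrix.diagonal (d^n) := by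
        show Umat * (((g^n : G) : Matrix.SpecialLinearGroup (Fin 3) F) :
          Matrix (Fin 3) (Fin 3) F) = _
        rw [hgpow]
      have h7 : ((((g^n * u : G) : Matrix.SpecialLinearGroup (Fin 3) F)) :
          Matrix (Fin 3) (Fin 3) F) = Matrix.diagonal (d^n) * Umat := by
        show (((g^n : G) : Matrix.SpecialLinearGroup (Fin 3) F) :
          Matrix (Fin 3) (Fin 3) F) * Umat = _
        rw [hgpow]
      rw [h6, h7] at h5
      exact h5
    have hent := congrFun (congrFun hmat 0) 1
    rw [Matrix.mul_diagonal, Matrix.diagonal_mul] at hent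
    have han : (a:F)^n = 1 := by
      simpa [hU, hd, Pi.pow_apply, Matrix.vecHead, Matrix.vecTail] using hent.symm
    have h8 : a^n = 1 := Units.ext (by simpa using han)
    rw [← ha]
    exact orderOf_dvd_of_pow_eq_one h8
  have hdvd1 : orderOf (QuotientGroup.mk g : G ⧸ Subgroup.center G) ∣ q - 1 := by
    apply orderOf_dvd_of_pow_eq_one
    have h9 : (QuotientGroup.mk g : G ⧸ Subgroup.center G)^(q-1) =
        (QuotientGroup.mk (g^(q-1)) : G ⧸ Subgroup.center G) := rfl
    rw [h9, hgq]
    rfl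
  exact Nat.dvd_antisymm hdvd1 (key _ (pow_orderOf_eq_one _))
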